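/- Let K be a field, A = K[e]/(e^4) with basis e_0 = 1, e_1, e_2, e_3. For θ_1, θ_2 ∈ K let W(θ_1,θ_2) = span{e_0, e_1 + θ_1 e_3, e_2 + θ_2 e_3}. Then for γ = e_0 - θ_2 e_1 - θ_1 e_2 (a unit of A), γ · W(θ_1, θ_2) = W(0,0). Consequently any two 3-dimensional subspaces of A containing e_0 but not e_3 are equivalent under multiplication by a unit of A. -/

import Mathlib

set_option maxHeartbeats 1000000


open Polynomial in
/-- in `A = K[e]/(e^4)`, with `W(θ₁,θ₂) = span{1, e + θ₁e³, e² + θ₂e³}`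
and `γ = 1 - θ₂e - θ₁e²`, the element `γ` is a unit and `γ·W(θ₁,θ₂) = W(0,0)`;
consequently any two 3-dimensional subspaces of `A` containing `1` but not `e³`
are equivalent under multiplication by a unit of `A`. -/
theorem stmt_15 (K : Type*) [Field K]
    (e : AdjoinRoot (X ^ 4 : K[X])) (he : e = AdjoinRoot.root (X ^ 4 : K[X]))
    (W : K → K → Submodule K (AdjoinRoot (X ^ 4 : K[X])))
    (hW : ∀ θ₁ θ₂ : K, W θ₁ θ₂ =
      Submodule.span K {1, e + θ₁ • e ^ 3, e ^ 2 + θ₂ • e ^ 3}) :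
    (∀ θ₁ θ₂ : K,
      IsUnit (1 - θ₂ • e - θ₁ • e ^ 2) ∧
      Submodule.map (LinearMap.mulLeft K (1 - θ₂ • e - θ₁ • e ^ 2)) (W θ₁ θ₂) = W 0 0) ∧
    (∀ V₁ V₂ : Submodule K (AdjoinRoot (X ^ 4 : K[X])),
      Module.finrank K V₁ = 3 → Module.finrank K V₂ = 3 →
      (1 : AdjoinRoot (X ^ 4 : K[X])) ∈ V₁ → (1 : AdjoinRoot (X ^ 4 : K[X])) ∈ V₂ →
      e ^ 3 ∉ V₁ → e ^ 3 ∉ V₂ →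
      ∃ γ : (AdjoinRoot (X ^ 4 : K[X]))ˣ,
        Submodule.map (LinearMap.mulLeft K (γ : AdjoinRoot (X ^ 4 : K[X]))) V₁ = V₂) := by
  have hpne : (X ^ 4 : K[X]) ≠ 0 := pow_ne_zero _ X_ne_zero
  have h4 : e ^ 4 = 0 := by
    rw [he, ← AdjoinRoot.mk_X, ← map_pow, AdjoinRoot.mk_self]
  set pb := AdjoinRoot.powerBasis hpne with hpbdef
  haveI : Module.Finite K (AdjoinRoot (X ^ 4 : K[X])) := Module.Finite.of_basis pb.basis
  have hdim : pb.dim = 4 := by rw [hpbdef, AdjoinRoot.powerBasis_dim]; simp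
  have hfinrank : Module.finrank K (AdjoinRoot (X ^ 4 : K[X])) = 4 := by
    rw [pb.finrank, hdim]
  have hgen : pb.gen = e := by rw [hpbdef, AdjoinRoot.powerBasis_gen, he]
  -- Part 1
  have part1 : ∀ θ₁ θ₂ : K,
      IsUnit (1 - θ₂ • e - θ₁ • e ^ 2) ∧
      Submodule.map (LinearMap.mulLeft K (1 - θ₂ • e - θ₁ • e ^ 2)) (W θ₁ θ₂) = W 0 0 := by
    intro θ₁ θ₂
    set t₁ := algebraMap K (AdjoinRoot (X ^ 4 : K[X])) θ₁ with ht₁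
    set t₂ := algebraMap K (AdjoinRoot (X ^ 4 : K[X])) θ₂ with ht₂
    have hγ : (1 - θ₂ • e - θ₁ • e ^ 2) = 1 - t₂ * e - t₁ * e ^ 2 := by
      rw [Algebra.smul_def, Algebra.smul_def]
    have ha : (1 - θ₂ • e - θ₁ • e ^ 2) * (e + θ₁ • e ^ 3) = e - θ₂ • e ^ 2 := by
      rw [hγ, Algebra.smul_def, Algebra.smul_def]
      linear_combination (-(t₂ * t₁) - t₁ ^ 2 * e) * h4
    have hb : (1 - θ₂ • e - θ₁ • e ^ 2) * (e ^ 2 + θ₂ • e ^ 3) = e ^ 2 := by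
      rw [hγ, Algebra.smul_def]
      linear_combination (-(t₂ ^ 2) - t₁ - t₁ * t₂ * e) * h4
    constructor
    · rw [hγ]
      refine isUnit_iff_exists_inv.2
        ⟨1 + (t₂ * e + t₁ * e ^ 2) + (t₂ * e + t₁ * e ^ 2) ^ 2 + (t₂ * e + t₁ * e ^ 2) ^ 3, ?_⟩
      linear_combination (-(t₂ + t₁ * e) ^ 4) * h4
    · rw [hW θ₁ θ₂, hW 0 0, Submodule.map_span]
      have himg : (LinearMap.mulLeft K (1 - θ₂ • e - θ₁ • e ^ 2)) ''
          {1, e + θ₁ • e ^ 3, e ^ 2 + θ₂ • e ^ 3}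
          = {1 - θ₂ • e - θ₁ • e ^ 2, e - θ₂ • e ^ 2, e ^ 2} := by
        rw [Set.image_insert_eq, Set.image_insert_eq, Set.image_singleton]
        simp only [LinearMap.mulLeft_apply, mul_one, ha, hb]
      rw [himg]
      simp only [zero_smul, add_zero]
      apply le_antisymm
      · rw [Submodule.span_le]
        intro x hx
        simp only [Set.mem_insert_iff, Set.mem_singleton_iff] at hx
        have m1 : (1 : AdjoinRoot (X ^ 4 : K[X])) ∈ Submodule.span K
            {(1 : AdjoinRoot (X ^ 4 : K[X])), e, e ^ 2} :=
          Submodule.subset_span (by left; rfl)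
        have m2 : e ∈ Submodule.span K {(1 : AdjoinRoot (X ^ 4 : K[X])), e, e ^ 2} :=
          Submodule.subset_span (by right; left; rfl)
        have m3 : e ^ 2 ∈ Submodule.span K {(1 : AdjoinRoot (X ^ 4 : K[X])), e, e ^ 2} :=
          Submodule.subset_span (by right; right; rfl)
        rcases hx with rfl | rfl | rfl
        · exact Submodule.sub_mem _ (Submodule.sub_mem _ m1 (Submodule.smul_mem _ _ m2))
            (Submodule.smul_mem _ _ m3)
        · exact Submodule.sub_mem _ m2 (Submodule.smul_mem _ _ m3)
        · exact m3
      · rw [Submodule.span_le]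
        intro x hx
        simp only [Set.mem_insert_iff, Set.mem_singleton_iff] at hx
        have m3 : e ^ 2 ∈ Submodule.span K
            {1 - θ₂ • e - θ₁ • e ^ 2, e - θ₂ • e ^ 2, e ^ 2} :=
          Submodule.subset_span (by right; right; rfl)
        have m2' : e - θ₂ • e ^ 2 ∈ Submodule.span K
            {1 - θ₂ • e - θ₁ • e ^ 2, e - θ₂ • e ^ 2, e ^ 2} :=
          Submodule.subset_span (by right; left; rfl)
        have m1' : 1 - θ₂ • e - θ₁ • e ^ 2 ∈ Submodule.span K
            {1 - θ₂ • e - θ₁ • e ^ 2, e - θ₂ • e ^ 2, e ^ 2} :=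
          Submodule.subset_span (by left; rfl)
        have m2 : e ∈ Submodule.span K
            {1 - θ₂ • e - θ₁ • e ^ 2, e - θ₂ • e ^ 2, e ^ 2} := by
          have h := Submodule.add_mem _ m2' (Submodule.smul_mem _ θ₂ m3)
          have heq : (e - θ₂ • e ^ 2) + θ₂ • e ^ 2 = e := by module
          rwa [heq] at h
        have m1 : (1 : AdjoinRoot (X ^ 4 : K[X])) ∈ Submodule.span K
            {1 - θ₂ • e - θ₁ • e ^ 2, e - θ₂ • e ^ 2, e ^ 2} := by
          have h := Submodule.add_mem _ (Submodule.add_mem _ m1' (Submodule.smul_mem _ θ₂ m2))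
            (Submodule.smul_mem _ θ₁ m3)
          have heq : (1 - θ₂ • e - θ₁ • e ^ 2) + θ₂ • e + θ₁ • e ^ 2
              = (1 : AdjoinRoot (X ^ 4 : K[X])) := by module
          rwa [heq] at h
        rcases hx with rfl | rfl | rfl
        · exact m1
        · exact m2
        · exact m3
  -- key: every such V equals some W θ₁ θ₂
  have key : ∀ V : Submodule K (AdjoinRoot (X ^ 4 : K[X])),
      Module.finrank K V = 3 → (1 : AdjoinRoot (X ^ 4 : K[X])) ∈ V → e ^ 3 ∉ V →
      ∃ θ₁ θ₂ : K, V = W θ₁ θ₂ := by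
    intro V hV h1V h3V
    have htop : V ⊔ (K ∙ e ^ 3) = ⊤ := by
      have hlt : V < V ⊔ (K ∙ e ^ 3) := by
        refine lt_of_le_of_ne le_sup_left (fun h => h3V ?_)
        rw [h]
        exact Submodule.mem_sup_right (Submodule.mem_span_singleton_self _)
      apply Submodule.eq_top_of_finrank_eq
      have hle := Submodule.finrank_le (V ⊔ (K ∙ e ^ 3))
      have hltr := Submodule.finrank_lt_finrank_of_lt hlt
      rw [hfinrank] at hle ⊢
      omega
    have hexists : ∀ x : AdjoinRoot (X ^ 4 : K[X]), ∃ c : K, x + c • e ^ 3 ∈ V := by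
      intro x
      have hx : x ∈ V ⊔ (K ∙ e ^ 3) := htop ▸ Submodule.mem_top
      rcases Submodule.mem_sup.1 hx with ⟨y, hy, z, hz, hyz⟩
      rcases Submodule.mem_span_singleton.1 hz with ⟨c, rfl⟩
      refine ⟨-c, ?_⟩
      have : x + (-c) • e ^ 3 = y := by rw [← hyz]; module
      rw [this]; exact hy
    obtain ⟨θ₁, hv₁⟩ := hexists e
    obtain ⟨θ₂, hv₂⟩ := hexists (e ^ 2)
    refine ⟨θ₁, θ₂, le_antisymm ?_ ?_⟩
    · -- V ≤ W θ₁ θ₂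
      intro x hx
      obtain ⟨b, hb⟩ : ∃ b : Module.Basis (Fin 4) K (AdjoinRoot (X ^ 4 : K[X])),
          ∀ i : Fin 4, b i = e ^ (i : ℕ) := by
        refine ⟨pb.basis.reindex (finCongr hdim), fun i => ?_⟩
        rw [Module.Basis.reindex_apply, pb.coe_basis, hgen]
        rfl
      have hx4 := b.sum_repr x
      rw [Fin.sum_univ_four] at hx4
      rw [hb 0, hb 1, hb 2, hb 3] at hx4
      have h2v : ((2 : Fin 4) : ℕ) = 2 := rfl
      have h3v : ((3 : Fin 4) : ℕ) = 3 := rfl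
      rw [h2v, h3v] at hx4
      simp only [Fin.val_zero, Fin.val_one, pow_zero, pow_one] at hx4
      set a0 := b.repr x 0 with ha0
      set a1 := b.repr x 1 with ha1
      set a2 := b.repr x 2 with ha2
      set a3 := b.repr x 3 with ha3
      have hx4' : a0 • (1 : AdjoinRoot (X ^ 4 : K[X])) + a1 • e + a2 • e ^ 2
          + a3 • e ^ 3 = x := hx4
      set c := a3 - a1 * θ₁ - a2 * θ₂ with hc
      have hy : x - a0 • (1 : AdjoinRoot (X ^ 4 : K[X])) - a1 • (e + θ₁ • e ^ 3)
          - a2 • (e ^ 2 + θ₂ • e ^ 3) = c • e ^ 3 := by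
        rw [← hx4', hc]; module
      have hyV : c • e ^ 3 ∈ V := by
        rw [← hy]
        exact Submodule.sub_mem _ (Submodule.sub_mem _
          (Submodule.sub_mem _ hx (Submodule.smul_mem _ _ h1V))
          (Submodule.smul_mem _ _ hv₁)) (Submodule.smul_mem _ _ hv₂)
      have hc0 : c = 0 := by
        by_contra hcne
        apply h3V
        have := Submodule.smul_mem V c⁻¹ hyV
        rwa [smul_smul, inv_mul_cancel₀ hcne, one_smul] at this
      have hx' : x = a0 • (1 : AdjoinRoot (X ^ 4 : K[X])) + a1 • (e + θ₁ • e ^ 3)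
          + a2 • (e ^ 2 + θ₂ • e ^ 3) := by
        rw [hc0, zero_smul, sub_sub, sub_sub, sub_eq_zero] at hy
        rw [hy]; abel
      rw [hW, hx']
      have m1 : (1 : AdjoinRoot (X ^ 4 : K[X])) ∈ Submodule.span K
          {(1 : AdjoinRoot (X ^ 4 : K[X])), e + θ₁ • e ^ 3, e ^ 2 + θ₂ • e ^ 3} :=
        Submodule.subset_span (by left; rfl)
      have m2 : e + θ₁ • e ^ 3 ∈ Submodule.span K
          {(1 : AdjoinRoot (X ^ 4 : K[X])), e + θ₁ • e ^ 3, e ^ 2 + θ₂ • e ^ 3} :=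
        Submodule.subset_span (by right; left; rfl)
      have m3 : e ^ 2 + θ₂ • e ^ 3 ∈ Submodule.span K
          {(1 : AdjoinRoot (X ^ 4 : K[X])), e + θ₁ • e ^ 3, e ^ 2 + θ₂ • e ^ 3} :=
        Submodule.subset_span (by right; right; rfl)
      exact Submodule.add_mem _ (Submodule.add_mem _ (Submodule.smul_mem _ _ m1)
        (Submodule.smul_mem _ _ m2)) (Submodule.smul_mem _ _ m3)
    · -- W θ₁ θ₂ ≤ V
      rw [hW, Submodule.span_le]
      intro x hx
      simp only [Set.mem_insert_iff, Set.mem_singleton_iff] at hx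
      rcases hx with rfl | rfl | rfl
      · exact h1V
      · exact hv₁
      · exact hv₂
  refine ⟨part1, ?_⟩
  intro V₁ V₂ hf1 hf2 h1V₁ h1V₂ h3V₁ h3V₂
  obtain ⟨θ₁, θ₂, rfl⟩ := key V₁ hf1 h1V₁ h3V₁
  obtain ⟨θ₁', θ₂', rfl⟩ := key V₂ hf2 h1V₂ h3V₂
  obtain ⟨hu₁, hm₁⟩ := part1 θ₁ θ₂
  obtain ⟨hu₂, hm₂⟩ := part1 θ₁' θ₂'
  obtain ⟨u₁, hu₁'⟩ := hu₁
  obtain ⟨u₂, hu₂'⟩ := hu₂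
  refine ⟨u₂⁻¹ * u₁, ?_⟩
  have hcoe : ((u₂⁻¹ * u₁ : (AdjoinRoot (X ^ 4 : K[X]))ˣ) : AdjoinRoot (X ^ 4 : K[X]))
      = (↑u₂⁻¹ : AdjoinRoot (X ^ 4 : K[X])) * ↑u₁ := rfl
  rw [hcoe, LinearMap.mulLeft_mul, Submodule.map_comp, hu₁', hm₁, ← hm₂, ← hu₂',
    ← Submodule.map_comp, ← LinearMap.mulLeft_mul]
  have : (↑u₂⁻¹ : AdjoinRoot (X ^ 4 : K[X])) * ↑u₂ = 1 := u₂.inv_mul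
  rw [this, LinearMap.mulLeft_one, Submodule.map_id]
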